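/- Let α and θ be real numbers with 0 ≤ α < 1 and θ > 0. Then the series ∑_{i=1}^∞ ∏_{j=1}^{i−1} (θ + jα)/(θ + 2 + jα) converges and its sum equals (θ + 2)/(2 − α). -/
import Mathlib


open Finset

/-- For real `0 ≤ α < 1` and `θ > 0`, the series
`∑_{i=1}^∞ ∏_{j=1}^{i-1} (θ + jα)/(θ + 2 + jα)` converges (here the summand for
`i` is indexed by `i - 1 = m : ℕ`, with the empty product for `m = 0` equal to 1)
and its sum equals `(θ + 2)/(2 - α)`.  (This is Gauss's evaluation of the
hypergeometric series `F(θ/α + 1, 1; (θ+2)/α + 1; 1)`.) -/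
theorem stmt9_gauss_sum (α θ : ℝ) (hα0 : 0 ≤ α) (hα1 : α < 1) (hθ : 0 < θ) :
    Summable (fun m : ℕ => ∏ j ∈ Finset.Icc 1 m, (θ + j * α) / (θ + 2 + j * α)) ∧
      (∑' m : ℕ, ∏ j ∈ Finset.Icc 1 m, (θ + j * α) / (θ + 2 + j * α)) =
        (θ + 2) / (2 - α) := by
  have h2α : (0:ℝ) < 2 - α := by linarith
  set f : ℕ → ℝ := fun m => ∏ j ∈ Finset.Icc 1 m, (θ + j * α) / (θ + 2 + j * α) with hf
  have hden : ∀ x : ℝ, 0 ≤ x → (0:ℝ) < θ + 2 + x * α := fun x hx => by nlinarith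
  have hnum : ∀ x : ℝ, 0 ≤ x → (0:ℝ) < θ + x * α := fun x hx => by nlinarith
  have hfpos : ∀ m, 0 < f m := fun m =>
    Finset.prod_pos (fun j _ => div_pos (hnum j j.cast_nonneg) (hden j j.cast_nonneg))
  set c : ℕ → ℝ := fun m => f m * (θ + 2 + m * α) / (2 - α) with hc
  have hstep : ∀ m : ℕ, f (m + 1) = f m * ((θ + (m + 1) * α) / (θ + 2 + (m + 1) * α)) := by
    intro m
    rw [hf]
    simp only
    rw [Finset.prod_Icc_succ_top (Nat.le_add_left 1 m)]
    push_cast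
    ring
  have htel : ∀ m, c m - c (m + 1) = f m := by
    intro m
    have h1 : (0:ℝ) < θ + 2 + (m + 1) * α := hden (m + 1) (by positivity)
    rw [hc]
    simp only
    rw [hstep m]
    push_cast
    field_simp
    ring
  have hpartial : ∀ N, ∑ m ∈ Finset.range N, f m = c 0 - c N := by
    intro N
    induction N with
    | zero => simp
    | succ n ih =>
      rw [Finset.sum_range_succ, ih]
      have := htel n
      linarith
  have hc0 : c 0 = (θ + 2) / (2 - α) := by
    have : f 0 = 1 := by simp [hf]
    simp [hc, this]
  have hcpos : ∀ m, 0 < c m := fun m =>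
    div_pos (mul_pos (hfpos m) (hden m m.cast_nonneg)) h2α
  have hsum : Summable f := by
    apply summable_of_sum_range_le (c := (θ + 2) / (2 - α)) (fun m => (hfpos m).le)
    intro n
    rw [hpartial n, hc0]
    have := hcpos n
    linarith
  refine ⟨hsum, ?_⟩
  have hS := hsum.hasSum.tendsto_sum_nat
  have hcEq : ∀ N, c N = c 0 - ∑ m ∈ Finset.range N, f m := fun N => by
    have := hpartial N; linarith
  have hcTend : Filter.Tendsto c Filter.atTop (nhds (c 0 - ∑' m, f m)) := by
    have h := (Filter.Tendsto.const_sub (c 0) hS)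
    exact h.congr (fun N => (hcEq N).symm)
  set L := c 0 - ∑' m, f m with hLdef
  have hcanti : Antitone c := antitone_nat_of_succ_le (fun n => by
    have := htel n; have := (hfpos n).le; linarith)
  have hLle : ∀ m, L ≤ c m := fun m => hcanti.le_of_tendsto hcTend m
  have hL0 : 0 ≤ L := by
    have := ge_of_tendsto' hcTend (fun m => (hcpos m).le)
    -- this : c 0 - ∑' m, f m ≥ 0? ge_of_tendsto' gives a ≥? check direction
    linarith [this]
  have hL : L = 0 := by
    by_contra hne
    have hLpos : 0 < L := lt_of_le_of_ne hL0 (Ne.symm hne)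
    have hK : (0:ℝ) < θ + 2 + α := by linarith
    have hC : (0:ℝ) < L * (2 - α) / (θ + 2 + α) := by positivity
    have hbd : ∀ m : ℕ, L * (2 - α) / (θ + 2 + α) * (1 / (m + 1)) ≤ f m := by
      intro m
      have hdm : (0:ℝ) < θ + 2 + m * α := hden m m.cast_nonneg
      have hfm : f m = c m * (2 - α) / (θ + 2 + m * α) := by
        rw [hc]; field_simp
      have h1 : L * (2 - α) / (θ + 2 + m * α) ≤ c m * (2 - α) / (θ + 2 + m * α) := by
        exact (div_le_div_iff_of_pos_right hdm).mpr (by nlinarith [hLle m])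
      have h2 : θ + 2 + (m:ℝ) * α ≤ (θ + 2 + α) * (m + 1) := by
        have : (0:ℝ) ≤ (m:ℝ) := m.cast_nonneg
        nlinarith
      have h3 : L * (2 - α) / (θ + 2 + α) * (1 / (m + 1)) ≤ L * (2 - α) / (θ + 2 + m * α) := by
        rw [div_mul_div_comm, mul_one]
        exact div_le_div_of_nonneg_left (by positivity) hdm h2
      rw [hfm]
      exact h3.trans h1
    have hsum2 : Summable (fun m : ℕ => L * (2 - α) / (θ + 2 + α) * (1 / ((m:ℝ) + 1))) :=
      Summable.of_nonneg_of_le (fun m => by positivity) hbd hsum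
    have hsum3 : Summable (fun m : ℕ => 1 / ((m:ℝ) + 1)) := by
      have := (summable_mul_left_iff (ne_of_gt hC)).mp hsum2
      exact this
    have hsum4 : Summable (fun n : ℕ => 1 / (n : ℝ)) := by
      rw [← summable_nat_add_iff 1]
      exact hsum3.congr (fun m => by push_cast; ring)
    exact Real.not_summable_one_div_natCast hsum4
  have : ∑' m, f m = c 0 - L := by rw [hLdef]; ring
  rw [this, hL, hc0]
  ring
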